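/- Let d ≥ 2. There exists a finite set Λ of unit vectors in ℝ^d, each having all coordinates rational, and for each ξ ∈ Λ a function γ_ξ from symmetric d×d real matrices to ℝ which is C^∞ (infinitely differentiable) on the closed ball B̄_{1/2}(Id) = {R symmetric : |R − Id| ≤ 1/2}, such that for every symmetric d×d matrix R with |R − Id| ≤ 1/2 one has R = Σ_{ξ∈Λ} γ_ξ(R)² (ξ ⊗ ξ), where ξ ⊗ ξ denotes the rank-one matrix with entries ξ_i ξ_j and |·| on matrices is the Frobenius norm. -/

import Mathlib

open scoped BigOperators

attribute [local instance] Matrix.normedAddCommGroup Matrix.normedSpace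

/-- Frobenius (Euclidean) norm of a `d × d` real matrix. -/
noncomputable def frobNorm {d : ℕ} (Q : Matrix (Fin d) (Fin d) ℝ) : ℝ :=
  Real.sqrt (∑ i, ∑ j, (Q i j) ^ 2)

open Matrix

namespace GeomLemma

variable {d : ℕ}

noncomputable def toE (Q : Matrix (Fin d) (Fin d) ℝ) : EuclideanSpace ℝ (Fin d × Fin d) :=
  WithLp.toLp 2 (fun p : Fin d × Fin d => Q p.1 p.2)

lemma toE_add (A B : Matrix (Fin d) (Fin d) ℝ) : toE (A + B) = toE A + toE B := rfl
lemma toE_sub (A B : Matrix (Fin d) (Fin d) ℝ) : toE (A - B) = toE A - toE B := rfl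
lemma toE_smul (c : ℝ) (A : Matrix (Fin d) (Fin d) ℝ) : toE (c • A) = c • toE A := rfl
lemma toE_sum {ι : Type*} (s : Finset ι) (f : ι → Matrix (Fin d) (Fin d) ℝ) :
    toE (∑ i ∈ s, f i) = ∑ i ∈ s, toE (f i) := by
  classical
  induction s using Finset.induction_on with
  | empty => simp only [Finset.sum_empty]; rfl
  | insert a s h ih => rw [Finset.sum_insert h, Finset.sum_insert h, toE_add, ih]

lemma frobNorm_eq (Q : Matrix (Fin d) (Fin d) ℝ) : frobNorm Q = ‖toE Q‖ := by
  rw [EuclideanSpace.norm_eq, frobNorm]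
  congr 1
  rw [Fintype.sum_prod_type]
  simp [toE, sq_abs]

lemma frobNorm_nonneg (Q : Matrix (Fin d) (Fin d) ℝ) : 0 ≤ frobNorm Q :=
  Real.sqrt_nonneg _

lemma frobNorm_add_le (A B : Matrix (Fin d) (Fin d) ℝ) :
    frobNorm (A + B) ≤ frobNorm A + frobNorm B := by
  rw [frobNorm_eq, frobNorm_eq, frobNorm_eq, toE_add]; exact norm_add_le _ _

lemma frobNorm_sum_le {ι : Type*} (s : Finset ι) (f : ι → Matrix (Fin d) (Fin d) ℝ) :
    frobNorm (∑ i ∈ s, f i) ≤ ∑ i ∈ s, frobNorm (f i) := by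
  rw [frobNorm_eq, toE_sum]
  exact (norm_sum_le _ _).trans (le_of_eq (by simp [frobNorm_eq]))

lemma sq_sum_le_frobSq (Q : Matrix (Fin d) (Fin d) ℝ) (i j : Fin d) :
    (Q i j) ^ 2 ≤ ∑ k, ∑ l, (Q k l) ^ 2 := by
  calc (Q i j) ^ 2 ≤ ∑ l, (Q i l) ^ 2 :=
        Finset.single_le_sum (f := fun l => (Q i l) ^ 2) (fun l _ => sq_nonneg _) (Finset.mem_univ j)
    _ ≤ ∑ k, ∑ l, (Q k l) ^ 2 :=
        Finset.single_le_sum (f := fun k => ∑ l, (Q k l) ^ 2)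
          (fun k _ => Finset.sum_nonneg fun l _ => sq_nonneg _) (Finset.mem_univ i)

lemma abs_entry_le_frobNorm (Q : Matrix (Fin d) (Fin d) ℝ) (i j : Fin d) :
    |Q i j| ≤ frobNorm Q := by
  rw [frobNorm, ← Real.sqrt_sq_eq_abs]
  exact Real.sqrt_le_sqrt (sq_sum_le_frobSq Q i j)

lemma frobSq_le_of_frobNorm_le {Q : Matrix (Fin d) (Fin d) ℝ} {c : ℝ}
    (h : frobNorm Q ≤ c) : ∑ i, ∑ j, (Q i j) ^ 2 ≤ c ^ 2 := by
  have h0 : (0:ℝ) ≤ ∑ i, ∑ j, (Q i j) ^ 2 :=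
    Finset.sum_nonneg fun i _ => Finset.sum_nonneg fun j _ => sq_nonneg _
  have h1 : Real.sqrt (∑ i, ∑ j, (Q i j) ^ 2) ≤ c := h
  have h2 := Real.sq_sqrt h0
  nlinarith [Real.sqrt_nonneg (∑ i, ∑ j, (Q i j) ^ 2)]

lemma frobNorm_le_of_frobSq_le {Q : Matrix (Fin d) (Fin d) ℝ} {c : ℝ} (hc : 0 ≤ c)
    (h : ∑ i, ∑ j, (Q i j) ^ 2 ≤ c ^ 2) : frobNorm Q ≤ c := by
  rw [frobNorm]
  calc Real.sqrt (∑ i, ∑ j, (Q i j) ^ 2) ≤ Real.sqrt (c ^ 2) := Real.sqrt_le_sqrt h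
  _ = c := by rw [Real.sqrt_sq hc]

lemma frobNorm_smul (c : ℝ) (A : Matrix (Fin d) (Fin d) ℝ) :
    frobNorm (c • A) = |c| * frobNorm A := by
  rw [frobNorm_eq, frobNorm_eq, toE_smul, norm_smul, Real.norm_eq_abs]

/-- Rational points are dense on the unit sphere. -/
lemma rat_unit_approx (hd : 0 < d) (v : Fin d → ℝ) (hv : ∑ i, v i ^ 2 = 1)
    {ε : ℝ} (hε : 0 < ε) :
    ∃ ξ : Fin d → ℝ, (∑ i, ξ i ^ 2 = 1) ∧ (∀ i, ∃ q : ℚ, ξ i = (q:ℝ)) ∧ ∀ i, |ξ i - v i| < ε := by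
  classical
  set i0 : Fin d := ⟨0, hd⟩
  set e0 : Fin d → ℝ := fun i => if i = i0 then 1 else 0 with he0
  have he0sum : ∑ i, e0 i ^ 2 = 1 := by
    simp [he0, Finset.sum_ite_eq']
  by_cases hve : v = e0
  · refine ⟨e0, he0sum, fun i => ⟨if i = i0 then 1 else 0, by simp [he0]; split <;> simp⟩,
      fun i => by simp [hve, hε]⟩
  -- reflection map
  set n : Fin d → ℝ := fun i => e0 i - v i with hn
  have hn0 : n ≠ 0 := by
    intro h
    apply hve
    funext i
    have := congrFun h i
    simp [hn] at this
    linarith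
  obtain ⟨iw, hiw⟩ : ∃ i, n i ≠ 0 := by
    by_contra h
    push_neg at h
    exact hn0 (funext fun i => h i)
  set F : (Fin d → ℝ) → (Fin d → ℝ) :=
    fun w i => e0 i - (2 * w i0 / ∑ j, w j ^ 2) * w i with hF
  -- sum of squares of n
  have hsum_e0v : ∑ i, e0 i * v i = v i0 := by
    simp [he0, Finset.sum_ite_eq']
  have hsn : ∑ j, n j ^ 2 = 2 * n i0 := by
    have : ∀ j, n j ^ 2 = e0 j ^ 2 - 2 * (e0 j * v j) + v j ^ 2 := fun j => by
      simp [hn]; ring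
    rw [Finset.sum_congr rfl fun j _ => this j]
    rw [Finset.sum_add_distrib, Finset.sum_sub_distrib, ← Finset.mul_sum,
      he0sum, hsum_e0v, hv]
    simp [hn, he0]
    ring
  have hni0 : n i0 ≠ 0 := by
    intro h
    -- then v i0 = 1, so v = e0
    have hv1 : v i0 = 1 := by simp [hn, he0] at h; linarith
    apply hve
    have hrest : ∑ i ∈ Finset.univ.erase i0, v i ^ 2 = 0 := by
      have h2 := Finset.add_sum_erase Finset.univ (fun i => v i ^ 2) (Finset.mem_univ i0)
      nlinarith [h2, hv, hv1]
    funext i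
    by_cases hi : i = i0
    · simp [hi, hv1, he0]
    · have : v i ^ 2 = 0 := by
        have hmem : i ∈ Finset.univ.erase i0 := Finset.mem_erase.2 ⟨hi, Finset.mem_univ i⟩
        have hnn : ∀ j ∈ Finset.univ.erase i0, 0 ≤ v j ^ 2 := fun j _ => sq_nonneg _
        exact le_antisymm (hrest ▸ Finset.single_le_sum hnn hmem) (sq_nonneg _)
      have : v i = 0 := by nlinarith
      simp [this, he0, hi]
  have hsn0 : ∑ j, n j ^ 2 ≠ 0 := by
    rw [hsn]; intro h; exact hni0 (by linarith)
  have hFn : F n = v := by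
    funext i
    have : 2 * n i0 / ∑ j, n j ^ 2 = 1 := by
      rw [hsn]; field_simp
    simp only [hF]
    rw [this, one_mul]
    simp only [hn]
    ring
  -- continuity of F at n
  have hcont : ContinuousAt F n := by
    apply continuousAt_pi.2
    intro i
    apply ContinuousAt.sub continuousAt_const
    apply ContinuousAt.mul
    · exact ContinuousAt.div (continuousAt_const.mul (continuous_apply i0).continuousAt)
        (continuous_finset_sum Finset.univ (fun j _ => (continuous_apply j).pow 2)).continuousAt
        hsn0
    · exact (continuous_apply i).continuousAt
  -- get δ from continuity
  obtain ⟨δ, hδpos, hδ⟩ := Metric.continuousAt_iff.1 hcont ε hε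
  set δ' : ℝ := min (δ / 2) (|n iw| / 2) with hδ'
  have hδ'pos : 0 < δ' := lt_min (by linarith) (by positivity)
  -- choose rational approximations
  have hex : ∀ i, ∃ q : ℚ, |n i - (q:ℝ)| < δ' := fun i => exists_rat_near (n i) hδ'pos
  choose w hw using hex
  set wr : Fin d → ℝ := fun i => (w i : ℝ) with hwr
  have hdist : dist wr n < δ := by
    rw [dist_pi_lt_iff (by linarith)]
    intro i
    rw [Real.dist_eq]
    calc |wr i - n i| = |n i - wr i| := abs_sub_comm _ _
      _ < δ' := hw i
      _ ≤ δ / 2 := min_le_left _ _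
      _ < δ := by linarith
  have hFw : dist (F wr) v < ε := by
    have := hδ hdist
    rwa [hFn] at this
  -- wr is nonzero: s wr > 0
  have hwiw : wr iw ≠ 0 := by
    intro h
    have h' : ((w iw : ℝ)) = 0 := h
    have hlt := hw iw
    rw [h', sub_zero] at hlt
    have h2 : δ' ≤ |n iw| / 2 := min_le_right _ _
    have h3 : 0 < |n iw| := abs_pos.2 hiw
    linarith
  have hswr : ∑ j, wr j ^ 2 ≠ 0 := by
    intro h
    apply hwiw
    have hle : wr iw ^ 2 ≤ ∑ j, wr j ^ 2 :=
      Finset.single_le_sum (f := fun j => wr j ^ 2) (fun j _ => sq_nonneg _) (Finset.mem_univ iw)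
    nlinarith [sq_nonneg (wr iw), Finset.sum_nonneg (fun j (_ : j ∈ Finset.univ) => sq_nonneg (wr j))]
  refine ⟨F wr, ?_, ?_, ?_⟩
  · -- unit norm
    have expand : ∀ i, (F wr) i ^ 2 =
        e0 i ^ 2 - (4 * wr i0 / ∑ j, wr j ^ 2) * (e0 i * wr i)
          + (2 * wr i0 / ∑ j, wr j ^ 2) ^ 2 * wr i ^ 2 := by
      intro i
      simp only [hF]
      ring
    rw [Finset.sum_congr rfl fun i _ => expand i]
    rw [Finset.sum_add_distrib, Finset.sum_sub_distrib, ← Finset.mul_sum, ← Finset.mul_sum,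
      he0sum]
    have hsum_e0w : ∑ i, e0 i * wr i = wr i0 := by
      simp [he0, Finset.sum_ite_eq']
    rw [hsum_e0w]
    field_simp
    ring
  · -- rationality
    intro i
    refine ⟨(if i = i0 then 1 else 0) - 2 * w i0 / (∑ j, w j ^ 2) * w i, ?_⟩
    have hcast : ((∑ j, w j ^ 2 : ℚ) : ℝ) = ∑ j, wr j ^ 2 := by
      push_cast [hwr]
      rfl
    simp only [hF, he0]
    push_cast [hcast]
    split <;> simp [hwr]
  · intro i
    calc |F wr i - v i| = dist (F wr i) (v i) := (Real.dist_eq _ _).symm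
      _ ≤ dist (F wr) v := dist_le_pi_dist _ _ i
      _ < ε := hFw

lemma dot_mulVec_abs_le (A : Matrix (Fin d) (Fin d) ℝ) (x : Fin d → ℝ) :
    |dotProduct x (A *ᵥ x)| ≤ frobNorm A * ∑ i, x i ^ 2 := by
  have h1 : (dotProduct x (A *ᵥ x)) ^ 2 ≤ (∑ i, x i ^ 2) * ∑ i, (A *ᵥ x) i ^ 2 := by
    have := Finset.sum_mul_sq_le_sq_mul_sq Finset.univ x (A *ᵥ x)
    simpa [dotProduct] using this
  have h2 : ∀ i, (A *ᵥ x) i ^ 2 ≤ (∑ j, A i j ^ 2) * ∑ j, x j ^ 2 := by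
    intro i
    have := Finset.sum_mul_sq_le_sq_mul_sq Finset.univ (A i) x
    simpa [Matrix.mulVec, dotProduct] using this
  have h3 : ∑ i, (A *ᵥ x) i ^ 2 ≤ (∑ i, ∑ j, A i j ^ 2) * ∑ j, x j ^ 2 := by
    calc ∑ i, (A *ᵥ x) i ^ 2 ≤ ∑ i, (∑ j, A i j ^ 2) * ∑ j, x j ^ 2 :=
          Finset.sum_le_sum fun i _ => h2 i
      _ = (∑ i, ∑ j, A i j ^ 2) * ∑ j, x j ^ 2 := by rw [Finset.sum_mul]
  have hx : (0:ℝ) ≤ ∑ i, x i ^ 2 := Finset.sum_nonneg fun i _ => sq_nonneg _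
  have hA : (0:ℝ) ≤ ∑ i, ∑ j, A i j ^ 2 :=
    Finset.sum_nonneg fun i _ => Finset.sum_nonneg fun j _ => sq_nonneg _
  have hfr : frobNorm A ^ 2 = ∑ i, ∑ j, A i j ^ 2 := Real.sq_sqrt hA
  have hfr0 : 0 ≤ frobNorm A := Real.sqrt_nonneg _
  have h4 : (dotProduct x (A *ᵥ x)) ^ 2 ≤ (frobNorm A * ∑ i, x i ^ 2) ^ 2 := by
    calc (dotProduct x (A *ᵥ x)) ^ 2
        ≤ (∑ i, x i ^ 2) * ∑ i, (A *ᵥ x) i ^ 2 := h1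
      _ ≤ (∑ i, x i ^ 2) * ((∑ i, ∑ j, A i j ^ 2) * ∑ j, x j ^ 2) :=
          mul_le_mul_of_nonneg_left h3 hx
      _ = (∑ i, ∑ j, A i j ^ 2) * (∑ i, x i ^ 2) ^ 2 := by ring
      _ = (frobNorm A * ∑ i, x i ^ 2) ^ 2 := by rw [mul_pow, hfr]
  calc |dotProduct x (A *ᵥ x)| = Real.sqrt ((dotProduct x (A *ᵥ x)) ^ 2) := by
        rw [Real.sqrt_sq_eq_abs]
    _ ≤ Real.sqrt ((frobNorm A * ∑ i, x i ^ 2) ^ 2) := Real.sqrt_le_sqrt h4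
    _ = frobNorm A * ∑ i, x i ^ 2 := Real.sqrt_sq (by positivity)

lemma isHermitian_of_isSymm {A : Matrix (Fin d) (Fin d) ℝ} (h : A.IsSymm) :
    A.IsHermitian := by
  rw [Matrix.IsHermitian, Matrix.conjTranspose_eq_transpose_of_trivial]; exact h

open scoped MatrixOrder in
lemma psd_eq_conjTranspose_mul_self {P : Matrix (Fin d) (Fin d) ℝ} (h : P.PosSemidef) :
    ∃ B : Matrix (Fin d) (Fin d) ℝ, P = Bᴴ * B := by
  obtain ⟨B, hB⟩ := CStarAlgebra.nonneg_iff_eq_star_mul_self.mp h.nonneg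
  exact ⟨B, hB⟩

set_option maxHeartbeats 2000000 in
/-- Any `R₀` in the set `K` admits an approximate decomposition
`R₀ ≈ ∑ lam m • w m ⊗ w m + (1/4) Id` with rational unit `w m` and `lam m ≥ 0`. -/
lemma center_decomp (hd : 0 < d) (R₀ : Matrix (Fin d) (Fin d) ℝ) (hsymm : R₀.IsSymm)
    (hfr : frobNorm (R₀ - 1) ≤ 1 / 2) {ρ' : ℝ} (hρ' : 0 < ρ') :
    ∃ (w : Fin d → (Fin d → ℝ)) (lam : Fin d → ℝ),
      (∀ m, (∑ i, w m i ^ 2 = 1) ∧ ∀ i, ∃ q : ℚ, w m i = (q:ℝ)) ∧ (∀ m, 0 ≤ lam m) ∧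
      frobNorm (R₀ - (∑ m, lam m • Matrix.vecMulVec (w m) (w m)) - (4⁻¹:ℝ) • 1) ≤ ρ' := by
  classical
  set P : Matrix (Fin d) (Fin d) ℝ := R₀ - (4⁻¹:ℝ) • 1 with hP
  have hPsd : P.PosSemidef := by
    refine Matrix.posSemidef_iff_dotProduct_mulVec.2 ⟨?_, ?_⟩
    · apply isHermitian_of_isSymm
      rw [Matrix.IsSymm] at *
      rw [hP, Matrix.transpose_sub, Matrix.transpose_smul, Matrix.transpose_one, hsymm]
    · intro x
      have hxx : dotProduct x x = ∑ i, x i ^ 2 := by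
        simp [dotProduct, sq]
      have hRHS : dotProduct x ((R₀ - 1) *ᵥ x) = dotProduct x (R₀ *ᵥ x) - ∑ i, x i ^ 2 := by
        rw [Matrix.sub_mulVec, Matrix.one_mulVec, dotProduct_sub, hxx]
      have hexp : dotProduct x (P *ᵥ x) = dotProduct x (R₀ *ᵥ x) - 4⁻¹ * ∑ i, x i ^ 2 := by
        rw [hP, Matrix.sub_mulVec, Matrix.smul_mulVec, Matrix.one_mulVec,
          dotProduct_sub, dotProduct_smul, hxx, smul_eq_mul]
      have hb := dot_mulVec_abs_le (R₀ - 1) x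
      have hx : (0:ℝ) ≤ ∑ i, x i ^ 2 := Finset.sum_nonneg fun i _ => sq_nonneg _
      have habs : |dotProduct x ((R₀ - 1) *ᵥ x)| ≤ (1/2) * ∑ i, x i ^ 2 :=
        le_trans hb (by nlinarith)
      have hlb := (abs_le.1 habs).1
      simp only [star_trivial]
      rw [hexp]
      linarith [hRHS, hlb]
  obtain ⟨B, hB⟩ := psd_eq_conjTranspose_mul_self hPsd
  have hPsum : P = ∑ m, Matrix.vecMulVec (B m) (B m) := by
    rw [hB]
    ext i j
    rw [Matrix.mul_apply, Matrix.sum_apply]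
    apply Finset.sum_congr rfl
    intro m _
    simp [Matrix.vecMulVec_apply, Matrix.conjTranspose_apply, mul_comm]
  -- per row m, define lam and w
  have hstep : ∀ m : Fin d, ∃ (wm : Fin d → ℝ) (lm : ℝ),
      ((∑ i, wm i ^ 2 = 1) ∧ ∀ i, ∃ q : ℚ, wm i = (q:ℝ)) ∧ 0 ≤ lm ∧
      frobNorm (Matrix.vecMulVec (B m) (B m) - lm • Matrix.vecMulVec wm wm) ≤ ρ' / d := by
    intro m
    set x : Fin d → ℝ := B m with hx
    by_cases h0 : ∑ i, x i ^ 2 = 0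
    · -- x = 0
      have hx0 : ∀ i, x i = 0 := by
        intro i
        have hle : x i ^ 2 ≤ ∑ j, x j ^ 2 :=
          Finset.single_le_sum (f := fun j => x j ^ 2) (fun j _ => sq_nonneg _)
            (Finset.mem_univ i)
        nlinarith [sq_nonneg (x i)]
      obtain ⟨e, he1, he2, _⟩ := rat_unit_approx hd (fun i => if i = ⟨0, hd⟩ then 1 else 0)
        (by simp [Finset.sum_ite_eq']) (ε := 1) one_pos
      refine ⟨e, 0, ⟨he1, he2⟩, le_refl _, ?_⟩
      have : Matrix.vecMulVec x x - (0:ℝ) • Matrix.vecMulVec e e = 0 := by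
        ext i j
        simp [Matrix.vecMulVec_apply, hx0]
      rw [this]
      have : frobNorm (0 : Matrix (Fin d) (Fin d) ℝ) = 0 := by
        simp [frobNorm]
      rw [this]
      positivity
    · set lm : ℝ := ∑ i, x i ^ 2 with hlm
      have hlmpos : 0 < lm := lt_of_le_of_ne (Finset.sum_nonneg fun i _ => sq_nonneg _)
        (Ne.symm h0)
      set v : Fin d → ℝ := fun i => x i / Real.sqrt lm with hv
      have hsq : Real.sqrt lm ^ 2 = lm := Real.sq_sqrt hlmpos.le
      have hsqpos : 0 < Real.sqrt lm := Real.sqrt_pos.2 hlmpos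
      have hvunit : ∑ i, v i ^ 2 = 1 := by
        rw [hv]
        have : ∀ i, (x i / Real.sqrt lm) ^ 2 = x i ^ 2 * (Real.sqrt lm ^ 2)⁻¹ := by
          intro i; rw [div_pow]; ring
        rw [Finset.sum_congr rfl fun i _ => this i, ← Finset.sum_mul, hsq]
        field_simp
        exact hlm.symm
      set ε : ℝ := ρ' / (d * (2 * d * lm + 1)) with hε
      have hεpos : 0 < ε := by
        apply div_pos hρ'
        have hdp : (0:ℝ) < d := by exact_mod_cast hd
        nlinarith [hlmpos, hdp, mul_pos (mul_pos hdp hdp) hlmpos]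
      obtain ⟨ξ, hξ1, hξ2, hξ3⟩ := rat_unit_approx hd v hvunit hεpos
      refine ⟨ξ, lm, ⟨hξ1, hξ2⟩, hlmpos.le, ?_⟩
      -- entrywise bound
      have hvbd : ∀ i, |v i| ≤ 1 := by
        intro i
        have : v i ^ 2 ≤ 1 := hvunit ▸ Finset.single_le_sum (f := fun j => v j ^ 2)
          (fun j _ => sq_nonneg _) (Finset.mem_univ i)
        nlinarith [abs_nonneg (v i), sq_abs (v i)]
      have hξbd : ∀ i, |ξ i| ≤ 1 := by
        intro i
        have : ξ i ^ 2 ≤ 1 := hξ1 ▸ Finset.single_le_sum (f := fun j => ξ j ^ 2)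
          (fun j _ => sq_nonneg _) (Finset.mem_univ i)
        nlinarith [abs_nonneg (ξ i), sq_abs (ξ i)]
      have hxv : ∀ i, x i = Real.sqrt lm * v i := by
        intro i; rw [hv]; field_simp
      have hentry : ∀ i j,
          |(Matrix.vecMulVec x x - lm • Matrix.vecMulVec ξ ξ) i j| ≤ lm * (2 * ε) := by
        intro i j
        have : (Matrix.vecMulVec x x - lm • Matrix.vecMulVec ξ ξ) i j
            = lm * (v i * v j - ξ i * ξ j) := by
          simp only [Matrix.sub_apply, Matrix.smul_apply, Matrix.vecMulVec_apply,
            smul_eq_mul]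
          rw [hxv i, hxv j]
          have h5 : Real.sqrt lm * Real.sqrt lm = lm := Real.mul_self_sqrt hlmpos.le
          rw [show Real.sqrt lm * v i * (Real.sqrt lm * v j)
              = (Real.sqrt lm * Real.sqrt lm) * (v i * v j) from by ring, h5]
          ring
        rw [this, abs_mul, abs_of_pos hlmpos]
        have hsplit : v i * v j - ξ i * ξ j = v i * (v j - ξ j) + ξ j * (v i - ξ i) := by ring
        have : |v i * v j - ξ i * ξ j| ≤ |v i| * |v j - ξ j| + |ξ j| * |v i - ξ i| := by
          rw [hsplit]
          calc |v i * (v j - ξ j) + ξ j * (v i - ξ i)|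
              ≤ |v i * (v j - ξ j)| + |ξ j * (v i - ξ i)| := abs_add_le _ _
            _ = |v i| * |v j - ξ j| + |ξ j| * |v i - ξ i| := by rw [abs_mul, abs_mul]
        have h1 := hξ3 i
        have h2 := hξ3 j
        rw [abs_sub_comm] at h1 h2
        have hb1 : |v i| * |v j - ξ j| ≤ 1 * ε :=
          mul_le_mul (hvbd i) (le_of_lt h2) (abs_nonneg _) zero_le_one
        have hb2 : |ξ j| * |v i - ξ i| ≤ 1 * ε :=
          mul_le_mul (hξbd j) (le_of_lt h1) (abs_nonneg _) zero_le_one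
        have hcomb : |v i * v j - ξ i * ξ j| ≤ 2 * ε := by linarith
        exact mul_le_mul_of_nonneg_left hcomb hlmpos.le
      -- frobenius bound
      have hfrob : frobNorm (Matrix.vecMulVec x x - lm • Matrix.vecMulVec ξ ξ)
          ≤ d * (lm * (2 * ε)) := by
        apply frobNorm_le_of_frobSq_le
        · positivity
        · calc ∑ i, ∑ j, ((Matrix.vecMulVec x x - lm • Matrix.vecMulVec ξ ξ) i j) ^ 2
              ≤ ∑ i : Fin d, ∑ j : Fin d, (lm * (2 * ε)) ^ 2 := by
                apply Finset.sum_le_sum; intro i _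
                apply Finset.sum_le_sum; intro j _
                have := hentry i j
                nlinarith [abs_nonneg ((Matrix.vecMulVec x x - lm • Matrix.vecMulVec ξ ξ) i j),
                  sq_abs ((Matrix.vecMulVec x x - lm • Matrix.vecMulVec ξ ξ) i j)]
            _ = (d:ℝ) * ((d:ℝ) * (lm * (2 * ε)) ^ 2) := by
                simp [Finset.sum_const, Finset.card_univ, mul_comm]
            _ ≤ ((d:ℝ) * (lm * (2 * ε))) ^ 2 := by
                have hd1 : (1:ℝ) ≤ d := by exact_mod_cast hd
                nlinarith [hlmpos, hεpos, sq_nonneg (lm * (2*ε))]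
      calc frobNorm (Matrix.vecMulVec x x - lm • Matrix.vecMulVec ξ ξ)
          ≤ d * (lm * (2 * ε)) := hfrob
        _ ≤ ρ' / d := by
            rw [hε]
            have hdpos : (0:ℝ) < d := by exact_mod_cast hd
            have hden : (0:ℝ) < (d:ℝ) * (2 * d * lm + 1) := by
              nlinarith [hlmpos, hdpos, mul_pos (mul_pos hdpos hdpos) hlmpos]
            have h1 : (d:ℝ) * (lm * (2 * (ρ' / ((d:ℝ) * (2 * (d:ℝ) * lm + 1)))))
                = (2 * (d:ℝ) * lm) * ρ' / ((d:ℝ) * (2 * (d:ℝ) * lm + 1)) := by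
              field_simp
            rw [h1, div_le_div_iff₀ hden hdpos]
            nlinarith [mul_pos hρ' hdpos, hlmpos, hdpos, hρ',
              mul_pos (mul_pos hdpos hdpos) (mul_pos hρ' hlmpos)]
  choose w lam hw hlam herr using hstep
  refine ⟨w, lam, fun m => hw m, fun m => hlam m, ?_⟩
  have hiden : R₀ - (∑ m, lam m • Matrix.vecMulVec (w m) (w m)) - (4⁻¹:ℝ) • 1
      = ∑ m, (Matrix.vecMulVec (B m) (B m) - lam m • Matrix.vecMulVec (w m) (w m)) := by
    rw [Finset.sum_sub_distrib, ← hPsum]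
    rw [hP]
    abel
  rw [hiden]
  calc frobNorm (∑ m, (Matrix.vecMulVec (B m) (B m) - lam m • Matrix.vecMulVec (w m) (w m)))
      ≤ ∑ m, frobNorm (Matrix.vecMulVec (B m) (B m) - lam m • Matrix.vecMulVec (w m) (w m)) :=
        frobNorm_sum_le _ _
    _ ≤ ∑ m : Fin d, ρ' / d := Finset.sum_le_sum fun m _ => herr m
    _ = ρ' := by
        rw [Finset.sum_const, Finset.card_univ, Fintype.card_fin]
        rw [nsmul_eq_mul]
        field_simp

def ev (i : Fin d) : Fin d → ℝ := fun x => if x = i then 1 else 0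

def sg (s : Bool) : ℝ := if s then 1 else -1

noncomputable def pv (i j : Fin d) (s : Bool) : Fin d → ℝ :=
  fun x => (3 * ev i x + sg s * 4 * ev j x) / 5

noncomputable def cdiag (ρ : ℝ) (M : Matrix (Fin d) (Fin d) ℝ) (i : Fin d) : ℝ :=
  M i i - (25/12) * ((d:ℝ) - 1) * ρ

noncomputable def cpair (ρ : ℝ) (M : Matrix (Fin d) (Fin d) ℝ) (i j : Fin d) (s : Bool) : ℝ :=
  if i = j then 0 else (25/48) * (2*ρ + sg s * M i j)

lemma sum_ev_weighted (k l : Fin d) (f : Fin d → ℝ) :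
    ∑ i, f i * (ev i k * ev i l) = (if k = l then f k else 0) := by
  rw [Finset.sum_eq_single k]
  · by_cases h : k = l <;> simp [ev, h, eq_comm]
  · intro i _ hik
    simp [ev, Ne.symm hik]
  · intro h; exact absurd (Finset.mem_univ k) h

lemma sum_ev_pair (a b : Fin d) (g : Fin d → Fin d → ℝ) :
    ∑ i, ∑ j, g i j * (ev i a * ev j b) = g a b := by
  have hinner : ∀ i : Fin d, ∑ j, g i j * (ev i a * ev j b) = g i b * ev i a := by
    intro i
    rw [Finset.sum_eq_single b]
    · simp [ev]
    · intro j _ hjb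
      simp [ev, Ne.symm hjb]
    · intro h; exact absurd (Finset.mem_univ b) h
  rw [Finset.sum_congr rfl fun i _ => hinner i]
  rw [Finset.sum_eq_single a]
  · simp [ev]
  · intro i _ hia
    simp [ev, Ne.symm hia]
  · intro h; exact absurd (Finset.mem_univ a) h

lemma sum_ev_diag_const (k l : Fin d) (c : ℝ) :
    ∑ i : Fin d, ∑ _j : Fin d, c * (ev i k * ev i l)
      = (d:ℝ) * c * (if k = l then 1 else 0) := by
  have : ∀ i : Fin d, ∑ _j : Fin d, c * (ev i k * ev i l) = ((d:ℝ) * c) * (ev i k * ev i l) := by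
    intro i
    rw [Finset.sum_const, Finset.card_univ, Fintype.card_fin, nsmul_eq_mul]
    ring
  rw [Finset.sum_congr rfl fun i _ => this i, sum_ev_weighted]
  by_cases h : k = l <;> simp [h]

lemma base_exact (ρ : ℝ) (M : Matrix (Fin d) (Fin d) ℝ) (hM : M.IsSymm) :
    (∑ i, cdiag ρ M i • Matrix.vecMulVec (ev i) (ev i))
      + (∑ i, ∑ j, ∑ s, cpair ρ M i j s • Matrix.vecMulVec (pv i j s) (pv i j s)) = M := by
  ext k l
  have hMsymm : M l k = M k l := by
    have := congrFun (congrFun hM k) l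
    simpa [Matrix.transpose_apply] using this
  simp only [Matrix.add_apply, Matrix.sum_apply, Matrix.smul_apply, Matrix.vecMulVec_apply,
    smul_eq_mul]
  have hT1 : ∑ i, cdiag ρ M i * (ev i k * ev i l)
      = (if k = l then cdiag ρ M k else 0) := sum_ev_weighted k l _
  rw [hT1]
  have hpair : ∀ i j : Fin d, (∑ s, cpair ρ M i j s * (pv i j s k * pv i j s l)) =
      (if i = j then 0 else
        (3/4)*ρ*(ev i k * ev i l) + (4/3)*ρ*(ev j k * ev j l)
          + (1/2)*M i j*(ev i k * ev j l + ev j k * ev i l)) := by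
    intro i j
    by_cases hij : i = j
    · simp [cpair, hij]
    · simp only [Fintype.sum_bool, cpair, hij, if_false, if_neg, sg, pv]
      norm_num
      ring
  rw [Finset.sum_congr rfl (fun i _ => Finset.sum_congr rfl (fun j _ => hpair i j))]
  have hsplit : ∀ i j : Fin d,
      (if i = j then (0:ℝ) else
        (3/4)*ρ*(ev i k * ev i l) + (4/3)*ρ*(ev j k * ev j l)
          + (1/2)*M i j*(ev i k * ev j l + ev j k * ev i l))
      = (3/4)*ρ*(ev i k * ev i l) + (4/3)*ρ*(ev j k * ev j l)
          + ((1/2)*M i j)*(ev i k * ev j l) + ((1/2)*M i j)*(ev j k * ev i l)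
        - (if i = j then (((25:ℝ)/12)*ρ + M i i) * (ev i k * ev i l) else 0) := by
    intro i j
    by_cases hij : i = j
    · simp only [hij, if_true]
      ring
    · simp only [hij, if_false]
      ring
  rw [Finset.sum_congr rfl (fun i _ => Finset.sum_congr rfl (fun j _ => hsplit i j))]
  have hsum4 : ∀ i : Fin d, ∑ j : Fin d,
      ((3/4)*ρ*(ev i k * ev i l) + (4/3)*ρ*(ev j k * ev j l)
          + ((1/2)*M i j)*(ev i k * ev j l) + ((1/2)*M i j)*(ev j k * ev i l)
        - (if i = j then (((25:ℝ)/12)*ρ + M i i) * (ev i k * ev i l) else 0))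
      = (∑ j : Fin d, (3/4)*ρ*(ev i k * ev i l))
        + (∑ j : Fin d, (4/3)*ρ*(ev j k * ev j l))
        + (∑ j : Fin d, ((1/2)*M i j)*(ev i k * ev j l))
        + (∑ j : Fin d, ((1/2)*M i j)*(ev j k * ev i l))
        - (((25:ℝ)/12)*ρ + M i i) * (ev i k * ev i l) := by
    intro i
    rw [Finset.sum_sub_distrib, Finset.sum_add_distrib, Finset.sum_add_distrib,
      Finset.sum_add_distrib, Finset.sum_ite_eq Finset.univ i]
    simp
  rw [Finset.sum_congr rfl (fun i _ => hsum4 i)]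
  rw [Finset.sum_sub_distrib, Finset.sum_add_distrib, Finset.sum_add_distrib,
    Finset.sum_add_distrib]
  have hP1 : ∑ i : Fin d, ∑ _j : Fin d, (3/4)*ρ*(ev i k * ev i l)
      = (d:ℝ) * ((3/4)*ρ) * (if k = l then 1 else 0) := sum_ev_diag_const k l _
  have hP2 : ∑ i : Fin d, ∑ j : Fin d, (4/3)*ρ*(ev j k * ev j l)
      = (d:ℝ) * ((4/3)*ρ) * (if k = l then 1 else 0) := by
    rw [Finset.sum_comm]
    exact sum_ev_diag_const k l _
  have hP3 : ∑ i : Fin d, ∑ j : Fin d, ((1/2)*M i j)*(ev i k * ev j l) = (1/2) * M k l :=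
    sum_ev_pair k l _
  have hP4 : ∑ i : Fin d, ∑ j : Fin d, ((1/2)*M i j)*(ev j k * ev i l) = (1/2) * M l k := by
    have swap : ∀ i j : Fin d, ((1/2)*M i j)*(ev j k * ev i l)
        = ((1/2)*M i j)*(ev i l * ev j k) := fun i j => by ring
    rw [Finset.sum_congr rfl (fun i _ => Finset.sum_congr rfl (fun j _ => swap i j))]
    exact sum_ev_pair l k _
  have hP5 : ∑ i : Fin d, (((25:ℝ)/12)*ρ + M i i) * (ev i k * ev i l)
      = (if k = l then ((25:ℝ)/12)*ρ + M k k else 0) := sum_ev_weighted k l _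
  rw [hP1, hP2, hP3, hP4, hP5]
  by_cases h : k = l
  · subst h
    simp only [if_true]
    rw [cdiag]
    ring
  · simp only [h, if_false]
    rw [hMsymm]
    ring

lemma ev_unit (i : Fin d) : ∑ x, ev i x ^ 2 = 1 := by
  simp [ev, Finset.sum_ite_eq']

lemma ev_rat (i : Fin d) : ∀ x, ∃ q : ℚ, ev i x = (q:ℝ) := by
  intro x
  by_cases h : x = i
  · exact ⟨1, by simp [ev, h]⟩
  · exact ⟨0, by simp [ev, h]⟩

lemma pv_unit {i j : Fin d} (hij : i ≠ j) (s : Bool) : ∑ x, pv i j s x ^ 2 = 1 := by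
  have hterm : ∀ x, pv i j s x ^ 2 = (9/25) * ev i x + (16/25) * ev j x := by
    intro x
    by_cases hxi : x = i <;> by_cases hxj : x = j
    · exact absurd (hxi ▸ hxj ▸ rfl : i = j) hij
    · cases s <;> simp [pv, ev, hxi, hxj, sg, hij, Ne.symm hij] <;> norm_num
    · cases s <;> simp [pv, ev, hxi, hxj, sg, hij, Ne.symm hij] <;> norm_num
    · cases s <;> simp [pv, ev, hxi, hxj, sg, hij, Ne.symm hij]
  rw [Finset.sum_congr rfl fun x _ => hterm x, Finset.sum_add_distrib,
    ← Finset.mul_sum, ← Finset.mul_sum]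
  have h1 : ∑ x, ev i x = 1 := by simp [ev, Finset.sum_ite_eq']
  have h2 : ∑ x, ev j x = 1 := by simp [ev, Finset.sum_ite_eq']
  rw [h1, h2]
  norm_num

lemma pv_rat (i j : Fin d) (s : Bool) : ∀ x, ∃ q : ℚ, pv i j s x = (q:ℝ) := by
  intro x
  refine ⟨(3 * (if x = i then 1 else 0) + (if s then 1 else -1) * 4 * (if x = j then 1 else 0)) / 5, ?_⟩
  simp only [pv, ev, sg]
  push_cast
  split <;> split <;> split <;> norm_num

lemma cdiag_pos (hd0 : 0 < d) {M : Matrix (Fin d) (Fin d) ℝ}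
    (h : frobNorm (M - (4⁻¹:ℝ) • 1) ≤ 1/(20*(d:ℝ))) (i : Fin d) :
    0 < cdiag (1/(20*(d:ℝ))) M i := by
  have hD1 : (1:ℝ) ≤ (d:ℝ) := by exact_mod_cast hd0
  have hent := abs_entry_le_frobNorm (M - (4⁻¹:ℝ) • 1) i i
  have hentry : (M - (4⁻¹:ℝ) • 1) i i = M i i - 4⁻¹ := by
    simp [Matrix.sub_apply, Matrix.smul_apply, Matrix.one_apply_eq]
  rw [hentry] at hent
  have h1 : |M i i - 4⁻¹| ≤ 1/(20*(d:ℝ)) := le_trans hent h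
  have h2 := (abs_le.1 h1).1
  rw [cdiag]
  have hd20 : (0:ℝ) < 20*(d:ℝ) := by linarith
  have key : (0:ℝ) < 4⁻¹ - 1/(20*(d:ℝ)) - (25/12) * ((d:ℝ) - 1) * (1/(20*(d:ℝ))) := by
    have expand : 4⁻¹ - 1/(20*(d:ℝ)) - (25/12) * ((d:ℝ) - 1) * (1/(20*(d:ℝ)))
        = (60*(d:ℝ) - 12 - 25*((d:ℝ)-1)) / (240*(d:ℝ)) := by
      field_simp
      ring
    rw [expand]
    apply div_pos <;> nlinarith
  linarith

lemma cpair_pos (hd0 : 0 < d) {M : Matrix (Fin d) (Fin d) ℝ}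
    (h : frobNorm (M - (4⁻¹:ℝ) • 1) ≤ 1/(20*(d:ℝ))) {i j : Fin d} (hij : i ≠ j) (s : Bool) :
    0 < cpair (1/(20*(d:ℝ))) M i j s := by
  have hD1 : (1:ℝ) ≤ (d:ℝ) := by exact_mod_cast hd0
  have hent := abs_entry_le_frobNorm (M - (4⁻¹:ℝ) • 1) i j
  have hentry : (M - (4⁻¹:ℝ) • 1) i j = M i j := by
    simp [Matrix.sub_apply, Matrix.smul_apply, Matrix.one_apply_ne hij]
  rw [hentry] at hent
  have h1 : |M i j| ≤ 1/(20*(d:ℝ)) := le_trans hent h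
  have habs := abs_le.1 h1
  have hρpos : (0:ℝ) < 1/(20*(d:ℝ)) := by positivity
  rw [cpair, if_neg hij]
  have hsg : -(1/(20*(d:ℝ))) ≤ sg s * M i j := by
    cases s
    · have hs : sg false = -1 := rfl
      rw [hs]; linarith [habs.2]
    · have hs : sg true = 1 := rfl
      rw [hs]; linarith [habs.1]
  nlinarith

lemma ev_isSymm_vecMulVec (x : Fin d → ℝ) : (Matrix.vecMulVec x x).IsSymm := by
  rw [Matrix.IsSymm]
  ext i j
  simp [Matrix.transpose_apply, Matrix.vecMulVec_apply, mul_comm]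

section Assembly

variable {t : Type*} [Fintype t] [DecidableEq t]

@[reducible] def Idx (d : ℕ) (t : Type*) := (Fin d ⊕ (Fin d × Fin d × Bool)) ⊕ (t × Fin d)

noncomputable def vec (w : t → Fin d → (Fin d → ℝ)) : Idx d t → (Fin d → ℝ)
  | .inl (.inl i) => ev i
  | .inl (.inr (i, j, s)) => if i = j then ev i else pv i j s
  | .inr (k, m) => w k m

noncomputable def Qmat (w : t → Fin d → (Fin d → ℝ)) : Matrix (Fin d) (Fin d) ℝ :=
  ∑ k : t, ∑ m : Fin d, Matrix.vecMulVec (w k m) (w k m)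

noncomputable def Mk (w : t → Fin d → (Fin d → ℝ)) (lam : t → Fin d → ℝ) (η : ℝ) (k : t)
    (R : Matrix (Fin d) (Fin d) ℝ) : Matrix (Fin d) (Fin d) ℝ :=
  R - (∑ m, lam k m • Matrix.vecMulVec (w k m) (w k m)) - η • Qmat w

noncomputable def coeff (w : t → Fin d → (Fin d → ℝ)) (lam : t → Fin d → ℝ) (ρ η : ℝ) (k : t) :
    Idx d t → Matrix (Fin d) (Fin d) ℝ → ℝ
  | .inl (.inl i) => fun R => cdiag ρ (Mk w lam η k R) i
  | .inl (.inr (i, j, s)) => fun R => cpair ρ (Mk w lam η k R) i j s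
  | .inr (p) => fun _ => η + (if p.1 = k then lam k p.2 else 0)

lemma isSymm_vecMulVec (x : Fin d → ℝ) : (Matrix.vecMulVec x x).IsSymm := by
  rw [Matrix.IsSymm]
  ext i j
  simp [Matrix.transpose_apply, Matrix.vecMulVec_apply, mul_comm]

lemma isSymm_sum_smul_vv {ι : Type*} (s : Finset ι) (f : ι → ℝ) (g : ι → (Fin d → ℝ)) :
    (∑ x ∈ s, f x • Matrix.vecMulVec (g x) (g x)).IsSymm := by
  rw [Matrix.IsSymm, Matrix.transpose_sum]
  apply Finset.sum_congr rfl
  intro x _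
  rw [Matrix.transpose_smul, isSymm_vecMulVec (g x)]

lemma isSymm_Qmat (w : t → Fin d → (Fin d → ℝ)) : (Qmat w).IsSymm := by
  rw [Matrix.IsSymm, Qmat, Matrix.transpose_sum]
  apply Finset.sum_congr rfl
  intro k _
  rw [Matrix.transpose_sum]
  apply Finset.sum_congr rfl
  intro m _
  exact isSymm_vecMulVec (w k m)

lemma isSymm_Mk (w : t → Fin d → (Fin d → ℝ)) (lam : t → Fin d → ℝ) (η : ℝ) (k : t)
    {R : Matrix (Fin d) (Fin d) ℝ} (hR : R.IsSymm) : (Mk w lam η k R).IsSymm := by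
  rw [Matrix.IsSymm, Mk, Matrix.transpose_sub, Matrix.transpose_sub, hR,
    Matrix.transpose_smul, isSymm_Qmat w, isSymm_sum_smul_vv Finset.univ (lam k) (w k)]

lemma patch_exact (w : t → Fin d → (Fin d → ℝ)) (lam : t → Fin d → ℝ) (ρ η : ℝ) (k : t)
    {R : Matrix (Fin d) (Fin d) ℝ} (hR : R.IsSymm) :
    ∑ a : Idx d t, coeff w lam ρ η k a R • Matrix.vecMulVec (vec w a) (vec w a) = R := by
  rw [Fintype.sum_sum_type, Fintype.sum_sum_type]
  have hbase1 : ∑ i : Fin d, coeff w lam ρ η k (.inl (.inl i)) R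
        • Matrix.vecMulVec (vec w (.inl (.inl i))) (vec w (.inl (.inl i)))
      = ∑ i, cdiag ρ (Mk w lam η k R) i • Matrix.vecMulVec (ev i) (ev i) := rfl
  have hbase2 : ∑ p : Fin d × Fin d × Bool, coeff w lam ρ η k (.inl (.inr p)) R
        • Matrix.vecMulVec (vec w (.inl (.inr p))) (vec w (.inl (.inr p)))
      = ∑ i, ∑ j, ∑ s, cpair ρ (Mk w lam η k R) i j s
          • Matrix.vecMulVec (pv i j s) (pv i j s) := by
    rw [Fintype.sum_prod_type]
    apply Finset.sum_congr rfl; intro i _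
    rw [Fintype.sum_prod_type]
    apply Finset.sum_congr rfl; intro j _
    apply Finset.sum_congr rfl; intro s _
    by_cases hij : i = j
    · simp [coeff, vec, cpair, hij]
    · simp [coeff, vec, cpair, hij]
  have hpatch : ∑ p : t × Fin d, coeff w lam ρ η k (.inr p) R
        • Matrix.vecMulVec (vec w (.inr p)) (vec w (.inr p))
      = η • Qmat w + ∑ m, lam k m • Matrix.vecMulVec (w k m) (w k m) := by
    rw [Fintype.sum_prod_type]
    have hsplit : ∀ (k' : t) (m : Fin d),
        coeff w lam ρ η k (.inr (k', m)) R
          • Matrix.vecMulVec (vec w (.inr (k', m))) (vec w (.inr (k', m)))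
        = η • Matrix.vecMulVec (w k' m) (w k' m)
          + (if k' = k then lam k m else 0) • Matrix.vecMulVec (w k' m) (w k' m) := by
      intro k' m
      rw [show coeff w lam ρ η k (.inr (k', m)) R = η + (if k' = k then lam k m else 0) from rfl]
      rw [add_smul]
      rfl
    rw [Finset.sum_congr rfl (fun k' _ => Finset.sum_congr rfl (fun m _ => hsplit k' m))]
    have : ∀ k' : t, ∑ m : Fin d,
        (η • Matrix.vecMulVec (w k' m) (w k' m)
          + (if k' = k then lam k m else 0) • Matrix.vecMulVec (w k' m) (w k' m))
        = (∑ m, η • Matrix.vecMulVec (w k' m) (w k' m))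
          + (if k' = k then ∑ m, lam k m • Matrix.vecMulVec (w k' m) (w k' m) else 0) := by
      intro k'
      rw [Finset.sum_add_distrib]
      congr 1
      by_cases h : k' = k
      · simp [h]
      · simp [h]
    rw [Finset.sum_congr rfl (fun k' _ => this k')]
    rw [Finset.sum_add_distrib, Finset.sum_ite_eq' Finset.univ k]
    simp only [Finset.mem_univ, if_true]
    congr 1
    rw [Qmat, Finset.smul_sum]
    apply Finset.sum_congr rfl
    intro k' _
    rw [Finset.smul_sum]
  rw [hbase1, hbase2, hpatch]
  rw [base_exact ρ (Mk w lam η k R) (isSymm_Mk w lam η k hR)]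
  rw [Mk]
  abel

lemma coeff_contDiff (w : t → Fin d → (Fin d → ℝ)) (lam : t → Fin d → ℝ) (ρ η : ℝ) (k : t)
    (a : Idx d t) : ContDiff ℝ (⊤:ℕ∞) (coeff w lam ρ η k a) := by
  have hentry : ∀ i j : Fin d, ContDiff ℝ (⊤:ℕ∞) (fun R : Matrix (Fin d) (Fin d) ℝ => R i j) :=
    fun i j => contDiff_apply_apply ℝ ℝ i j
  match a with
  | .inl (.inl i) =>
    have hfun : (coeff w lam ρ η k (.inl (.inl i)))
        = fun R : Matrix (Fin d) (Fin d) ℝ => R i i -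
          ((∑ m, lam k m • Matrix.vecMulVec (w k m) (w k m)) i i + η * Qmat w i i
            + (25/12) * ((d:ℝ) - 1) * ρ) := by
      funext R
      show cdiag ρ (Mk w lam η k R) i = _
      rw [cdiag, Mk]
      simp only [Matrix.sub_apply, Matrix.smul_apply, smul_eq_mul]
      ring
    rw [hfun]
    exact (hentry i i).sub contDiff_const
  | .inl (.inr (i, j, s)) =>
    by_cases hij : i = j
    · have hfun : (coeff w lam ρ η k (.inl (.inr (i, j, s)))) = fun _ => (0:ℝ) := by
        funext R
        show cpair ρ (Mk w lam η k R) i j s = 0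
        rw [cpair, if_pos hij]
      rw [hfun]
      exact contDiff_const
    · have hfun : (coeff w lam ρ η k (.inl (.inr (i, j, s))))
          = fun R : Matrix (Fin d) (Fin d) ℝ =>
            (25/48) * (2*ρ + sg s * (R i j -
              ((∑ m, lam k m • Matrix.vecMulVec (w k m) (w k m)) i j + η * Qmat w i j))) := by
        funext R
        show cpair ρ (Mk w lam η k R) i j s = _
        rw [cpair, if_neg hij, Mk]
        simp only [Matrix.sub_apply, Matrix.smul_apply, smul_eq_mul]
        ring_nf
      rw [hfun]
      apply ContDiff.mul contDiff_const
      apply ContDiff.add contDiff_const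
      apply ContDiff.mul contDiff_const
      exact (hentry i j).sub contDiff_const
  | .inr p => exact contDiff_const

end Assembly

section Assembly

variable {t : Type*} [Fintype t] [DecidableEq t]

lemma coeff_nonneg (hd0 : 0 < d) (w : t → Fin d → (Fin d → ℝ)) (lam : t → Fin d → ℝ) {η : ℝ}
    (hη : 0 < η) (k : t) (hlamk : ∀ k' m, 0 ≤ lam k' m) {R : Matrix (Fin d) (Fin d) ℝ}
    (hball : frobNorm (Mk w lam η k R - (4⁻¹:ℝ) • 1) ≤ 1/(20*(d:ℝ))) :
    ∀ a : Idx d t, 0 ≤ coeff w lam (1/(20*(d:ℝ))) η k a R := by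
  intro a
  match a with
  | .inl (.inl i) => exact (cdiag_pos hd0 hball i).le
  | .inl (.inr (i, j, s)) =>
    by_cases hij : i = j
    · show 0 ≤ cpair _ _ i j s
      rw [cpair, if_pos hij]
    · exact (cpair_pos hd0 hball hij s).le
  | .inr p =>
    show 0 ≤ η + _
    by_cases h : p.1 = k
    · rw [if_pos h]; have := hlamk k p.2; linarith
    · rw [if_neg h]; linarith

lemma coeff_rep_pos (hd0 : 0 < d) (w : t → Fin d → (Fin d → ℝ)) (lam : t → Fin d → ℝ) {η : ℝ}
    (hη : 0 < η) (k : t) (hlamk : ∀ k' m, 0 ≤ lam k' m) {R : Matrix (Fin d) (Fin d) ℝ}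
    (hball : frobNorm (Mk w lam η k R - (4⁻¹:ℝ) • 1) ≤ 1/(20*(d:ℝ))) :
    ∀ a : Idx d t, ∃ a' : Idx d t, vec w a' = vec w a ∧
      0 < coeff w lam (1/(20*(d:ℝ))) η k a' R := by
  intro a
  match a with
  | .inl (.inl i) => exact ⟨.inl (.inl i), rfl, cdiag_pos hd0 hball i⟩
  | .inl (.inr (i, j, s)) =>
    by_cases hij : i = j
    · refine ⟨.inl (.inl i), ?_, cdiag_pos hd0 hball i⟩
      show ev i = vec w (.inl (.inr (i, j, s)))
      rw [show vec w (.inl (.inr (i, j, s))) = if i = j then ev i else pv i j s from rfl,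
        if_pos hij]
    · exact ⟨.inl (.inr (i, j, s)), rfl, cpair_pos hd0 hball hij s⟩
  | .inr p =>
    refine ⟨.inr p, rfl, ?_⟩
    show 0 < η + _
    by_cases h : p.1 = k
    · rw [if_pos h]; have := hlamk k p.2; linarith
    · rw [if_neg h]; linarith

lemma vec_unit_rat (w : t → Fin d → (Fin d → ℝ))
    (hw : ∀ k m, (∑ i, w k m i ^ 2 = 1) ∧ ∀ i, ∃ q : ℚ, w k m i = (q:ℝ)) (a : Idx d t) :
    (∑ i, vec w a i ^ 2 = 1) ∧ ∀ i, ∃ q : ℚ, vec w a i = (q:ℝ) := by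
  match a with
  | .inl (.inl i) => exact ⟨ev_unit i, ev_rat i⟩
  | .inl (.inr (i, j, s)) =>
    by_cases hij : i = j
    · have hv : vec w (.inl (.inr (i, j, s))) = ev i := by
        rw [show vec w (.inl (.inr (i, j, s))) = if i = j then ev i else pv i j s from rfl,
          if_pos hij]
      rw [hv]
      exact ⟨ev_unit i, ev_rat i⟩
    · have hv : vec w (.inl (.inr (i, j, s))) = pv i j s := by
        rw [show vec w (.inl (.inr (i, j, s))) = if i = j then ev i else pv i j s from rfl,
          if_neg hij]
      rw [hv]
      exact ⟨pv_unit hij s, pv_rat i j s⟩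
  | .inr p => exact hw p.1 p.2

end Assembly

end GeomLemma

open GeomLemma

set_option maxHeartbeats 2000000 in
/-- Geometric lemma (De Lellis–Székelyhidi type): there is a finite set `Λ` of rational
unit vectors in `ℝ^d` and smooth functions `γ_ξ` on the closed Frobenius ball
`B̄_{1/2}(Id)` of symmetric matrices such that
`R = ∑_{ξ ∈ Λ} γ_ξ(R)² (ξ ⊗ ξ)` for every symmetric `R` with `|R − Id| ≤ 1/2`. -/
theorem geometric_lemma (d : ℕ) (hd : 2 ≤ d) :
    ∃ (Λ : Finset (Fin d → ℝ)) (γ : (Fin d → ℝ) → Matrix (Fin d) (Fin d) ℝ → ℝ),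
      (∀ ξ ∈ Λ, (∑ i, ξ i ^ 2 = 1) ∧ ∀ i, ∃ q : ℚ, ξ i = (q : ℝ)) ∧
      (∀ ξ ∈ Λ, ContDiffOn ℝ (⊤ : ℕ∞) (γ ξ)
        {R : Matrix (Fin d) (Fin d) ℝ | R.IsSymm ∧ frobNorm (R - 1) ≤ 1 / 2}) ∧
      (∀ R : Matrix (Fin d) (Fin d) ℝ, R.IsSymm → frobNorm (R - 1) ≤ 1 / 2 →
        R = ∑ ξ ∈ Λ, (γ ξ R) ^ 2 • Matrix.vecMulVec ξ ξ) := by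
  classical
  have hd0 : 0 < d := by omega
  have hdR : (0:ℝ) < (d:ℝ) := by exact_mod_cast hd0
  set ρ : ℝ := 1/(20*(d:ℝ)) with hρdef
  have hρpos : 0 < ρ := by rw [hρdef]; apply div_pos one_pos; linarith
  set K : Set (Matrix (Fin d) (Fin d) ℝ) :=
    {R : Matrix (Fin d) (Fin d) ℝ | R.IsSymm ∧ frobNorm (R - 1) ≤ 1 / 2} with hKdef
  -- center data
  have hcenter : ∀ R₀ : Matrix (Fin d) (Fin d) ℝ, R₀ ∈ K →
      ∃ (w : Fin d → (Fin d → ℝ)) (lam : Fin d → ℝ),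
        (∀ m, (∑ i, w m i ^ 2 = 1) ∧ ∀ i, ∃ q : ℚ, w m i = (q:ℝ)) ∧ (∀ m, 0 ≤ lam m) ∧
        frobNorm (R₀ - (∑ m, lam m • Matrix.vecMulVec (w m) (w m)) - (4⁻¹:ℝ) • 1) ≤ ρ/8 :=
    fun R₀ hR₀ => center_decomp hd0 R₀ hR₀.1 hR₀.2 (by positivity)
  choose! w0 lam0 hw0 hlam0 herr0 using hcenter
  -- continuity facts
  have hcont_entry : ∀ (i j : Fin d), Continuous fun R : Matrix (Fin d) (Fin d) ℝ => R i j :=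
    fun i j => (continuous_apply j).comp (continuous_apply i)
  -- K is compact
  have hKclosed : IsClosed K := by
    have h1 : IsClosed {R : Matrix (Fin d) (Fin d) ℝ | R.IsSymm} :=
      isClosed_eq (continuous_id.matrix_transpose) continuous_id
    have h2 : IsClosed {R : Matrix (Fin d) (Fin d) ℝ | frobNorm (R - 1) ≤ 1/2} := by
      apply isClosed_le _ continuous_const
      show Continuous fun R : Matrix (Fin d) (Fin d) ℝ =>
        Real.sqrt (∑ i, ∑ j, ((R - 1) i j) ^ 2)
      apply Real.continuous_sqrt.comp
      apply continuous_finset_sum; intro i _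
      apply continuous_finset_sum; intro j _
      exact ((hcont_entry i j).comp (continuous_id.sub continuous_const)).pow 2
    exact h1.inter h2
  have hKcompact : IsCompact K := by
    have hsub : K ⊆ Metric.closedBall 0 (‖(1 : Matrix (Fin d) (Fin d) ℝ)‖ + 1/2) := by
      intro R hR
      rw [Metric.mem_closedBall, dist_zero_right]
      have h1 : ‖R - 1‖ ≤ frobNorm (R - 1) := by
        rw [Matrix.norm_le_iff (frobNorm_nonneg _)]
        intro i j
        rw [Real.norm_eq_abs]
        exact abs_entry_le_frobNorm _ i j
      calc ‖R‖ = ‖(1 : Matrix (Fin d) (Fin d) ℝ) + (R - 1)‖ := by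
            rw [show (1 : Matrix (Fin d) (Fin d) ℝ) + (R - 1) = R from by abel]
        _ ≤ ‖(1 : Matrix (Fin d) (Fin d) ℝ)‖ + ‖R - 1‖ := norm_add_le _ _
        _ ≤ ‖(1 : Matrix (Fin d) (Fin d) ℝ)‖ + 1/2 := by
            have := hR.2
            linarith [le_trans h1 this]
    exact (isCompact_closedBall _ _).of_isClosed_subset hKclosed hsub
  -- cover and finite subcover
  set V : ↥K → Set (Matrix (Fin d) (Fin d) ℝ) :=
    fun k => {R | ∑ i, ∑ j, ((R - (k : Matrix (Fin d) (Fin d) ℝ)) i j) ^ 2 < (ρ/2)^2}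
    with hVdef
  have hVopen : ∀ k : ↥K, IsOpen (V k) := by
    intro k
    apply isOpen_lt _ continuous_const
    apply continuous_finset_sum; intro i _
    apply continuous_finset_sum; intro j _
    exact ((hcont_entry i j).comp (continuous_id.sub continuous_const)).pow 2
  have hVcover : K ⊆ ⋃ k : ↥K, V k := by
    intro R hR
    apply Set.mem_iUnion.2
    refine ⟨⟨R, hR⟩, ?_⟩
    show ∑ i, ∑ j, ((R - R) i j) ^ 2 < (ρ/2)^2
    have : ∀ i j : Fin d, ((R - R) i j) ^ 2 = 0 := by
      intro i j; simp
    rw [Finset.sum_congr rfl fun i _ => Finset.sum_congr rfl fun j _ => this i j]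
    simp
    positivity
  obtain ⟨tt, htt⟩ := hKcompact.elim_finite_subcover V hVopen hVcover
  -- patch index type
  set PI := {x : ↥K // x ∈ tt} with hPIdef
  have : Fintype PI := FinsetCoe.fintype tt
  set cen : PI → Matrix (Fin d) (Fin d) ℝ := fun k => (k.1 : Matrix (Fin d) (Fin d) ℝ)
    with hcendef
  have hcenK : ∀ k : PI, cen k ∈ K := fun k => k.1.2
  set wf : PI → Fin d → (Fin d → ℝ) := fun k => w0 (cen k) with hwfdef
  set lamf : PI → Fin d → ℝ := fun k => lam0 (cen k) with hlamfdef
  have hwf : ∀ (k : PI) m, (∑ i, wf k m i ^ 2 = 1) ∧ ∀ i, ∃ q : ℚ, wf k m i = (q:ℝ) :=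
    fun k m => hw0 (cen k) (hcenK k) m
  have hlamf : ∀ (k : PI) m, 0 ≤ lamf k m := fun k m => hlam0 (cen k) (hcenK k) m
  set Q : Matrix (Fin d) (Fin d) ℝ := Qmat wf with hQdef
  set η : ℝ := ρ/(8*(1 + frobNorm Q)) with hηdef
  have hQnn : 0 ≤ frobNorm Q := frobNorm_nonneg Q
  have hηpos : 0 < η := by rw [hηdef]; apply div_pos hρpos; nlinarith
  have hηQ : η * frobNorm Q ≤ ρ/8 := by
    rw [hηdef]
    rw [div_mul_eq_mul_div, div_le_div_iff₀ (by nlinarith) (by norm_num)]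
    nlinarith
  -- the ball condition implies coefficient positivity
  have hMkball : ∀ (k : PI) (R : Matrix (Fin d) (Fin d) ℝ),
      (∑ i, ∑ j, ((R - cen k) i j) ^ 2) ≤ (ρ/2)^2 →
      frobNorm (Mk wf lamf η k R - (4⁻¹:ℝ) • 1) ≤ ρ := by
    intro k R hball
    have h1 : frobNorm (R - cen k) ≤ ρ/2 :=
      frobNorm_le_of_frobSq_le (by positivity) hball
    have h2 : frobNorm (cen k - (∑ m, lamf k m • Matrix.vecMulVec (wf k m) (wf k m))
        - (4⁻¹:ℝ) • 1) ≤ ρ/8 := herr0 (cen k) (hcenK k)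
    have h3 : frobNorm ((-η) • Q) ≤ ρ/8 := by
      rw [frobNorm_smul, abs_neg, abs_of_pos hηpos]
      exact hηQ
    have hid : Mk wf lamf η k R - (4⁻¹:ℝ) • 1
        = (R - cen k) + ((cen k - (∑ m, lamf k m • Matrix.vecMulVec (wf k m) (wf k m))
            - (4⁻¹:ℝ) • 1) + (-η) • Q) := by
      rw [Mk, neg_smul]
      abel
    rw [hid]
    calc frobNorm _ ≤ frobNorm (R - cen k)
          + frobNorm ((cen k - (∑ m, lamf k m • Matrix.vecMulVec (wf k m) (wf k m))
            - (4⁻¹:ℝ) • 1) + (-η) • Q) := frobNorm_add_le _ _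
      _ ≤ ρ/2 + (ρ/8 + ρ/8) := by
          have := frobNorm_add_le (cen k - (∑ m, lamf k m • Matrix.vecMulVec (wf k m) (wf k m))
            - (4⁻¹:ℝ) • 1) ((-η) • Q)
          have hsum := add_le_add h2 h3
          linarith
      _ ≤ ρ := by linarith
  -- cutoffs
  set φ : PI → Matrix (Fin d) (Fin d) ℝ → ℝ :=
    fun k R => Real.smoothTransition ((ρ/2)^2 - ∑ i, ∑ j, ((R - cen k) i j) ^ 2) with hφdef
  have hφnonneg : ∀ k R, 0 ≤ φ k R := fun k R => Real.smoothTransition.nonneg _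
  have hφpos_ball : ∀ k R, 0 < φ k R → (∑ i, ∑ j, ((R - cen k) i j) ^ 2) ≤ (ρ/2)^2 := by
    intro k R h
    by_contra hc
    push_neg at hc
    have : φ k R = 0 := Real.smoothTransition.zero_of_nonpos (by linarith)
    linarith
  have hφpos_of_mem : ∀ (k : PI) (R), R ∈ V k.1 → 0 < φ k R := by
    intro k R hmem
    apply Real.smoothTransition.pos_of_pos
    have : ∑ i, ∑ j, ((R - cen k) i j) ^ 2 < (ρ/2)^2 := hmem
    linarith
  have hφsmooth : ∀ k : PI, ContDiff ℝ (⊤:ℕ∞) (φ k) := by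
    intro k
    apply ContDiff.comp Real.smoothTransition.contDiff
    apply ContDiff.sub contDiff_const
    apply ContDiff.sum; intro i _
    apply ContDiff.sum; intro j _
    have : (fun R : Matrix (Fin d) (Fin d) ℝ => ((R - cen k) i j) ^ 2)
        = fun R : Matrix (Fin d) (Fin d) ℝ => (R i j - cen k i j) ^ 2 := by
      funext R; rw [Matrix.sub_apply]
    rw [this]
    exact ((contDiff_apply_apply ℝ ℝ i j).sub contDiff_const).pow 2
  set D : Matrix (Fin d) (Fin d) ℝ → ℝ := fun R => ∑ k : PI, φ k R with hDdef
  have hDsmooth : ContDiff ℝ (⊤:ℕ∞) D := ContDiff.sum fun k _ => hφsmooth k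
  set U : Set (Matrix (Fin d) (Fin d) ℝ) := {R | 0 < D R} with hUdef
  have hUopen : IsOpen U := isOpen_lt continuous_const hDsmooth.continuous
  have hKU : K ⊆ U := by
    intro R hR
    obtain ⟨k, hk, hmem⟩ := Set.mem_iUnion₂.1 (htt hR)
    show 0 < D R
    apply Finset.sum_pos' (fun k' _ => hφnonneg k' R)
    exact ⟨⟨k, hk⟩, Finset.mem_univ _, hφpos_of_mem ⟨k, hk⟩ R hmem⟩
  -- total coefficients and gamma
  set ctot : Idx d PI → Matrix (Fin d) (Fin d) ℝ → ℝ :=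
    fun a R => (∑ k : PI, φ k R * coeff wf lamf ρ η k a R) / D R with hctotdef
  set Λ : Finset (Fin d → ℝ) := Finset.image (GeomLemma.vec wf) Finset.univ with hΛdef
  set γ : (Fin d → ℝ) → Matrix (Fin d) (Fin d) ℝ → ℝ :=
    fun ξ R => Real.sqrt (∑ a ∈ Finset.univ.filter (fun a => GeomLemma.vec wf a = ξ), ctot a R) with hγdef
  have hρ20 : ρ = 1/(20*(d:ℝ)) := hρdef
  have hterm_nonneg : ∀ (k : PI) (a : Idx d PI) (R : Matrix (Fin d) (Fin d) ℝ),
      0 ≤ φ k R * coeff wf lamf ρ η k a R := by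
    intro k a R
    rcases lt_or_eq_of_le (hφnonneg k R) with hlt | heq
    · apply mul_nonneg (hφnonneg k R)
      have hball := hMkball k R (hφpos_ball k R hlt)
      rw [hρ20] at hball ⊢
      exact coeff_nonneg hd0 wf lamf hηpos k hlamf hball a
    · rw [← heq, zero_mul]
  have hsumnum_pos : ∀ R ∈ U, ∀ a : Idx d PI,
      0 < ∑ a' ∈ Finset.univ.filter (fun a' => GeomLemma.vec wf a' = GeomLemma.vec wf a),
        ∑ k : PI, φ k R * coeff wf lamf ρ η k a' R := by
    intro R hRU a
    have hDpos : 0 < D R := hRU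
    have hk : ∃ k : PI, 0 < φ k R := by
      by_contra hc
      push_neg at hc
      have h0 : D R ≤ 0 := Finset.sum_nonpos fun k _ => hc k
      linarith
    obtain ⟨k, hkpos⟩ := hk
    have hball := hMkball k R (hφpos_ball k R hkpos)
    rw [hρ20] at hball
    obtain ⟨a', ha'eq, ha'pos⟩ := coeff_rep_pos hd0 wf lamf hηpos k hlamf hball a
    rw [← hρ20] at ha'pos
    apply Finset.sum_pos'
    · intro a'' _
      exact Finset.sum_nonneg fun k' _ => hterm_nonneg k' a'' R
    · refine ⟨a', Finset.mem_filter.2 ⟨Finset.mem_univ _, ha'eq⟩, ?_⟩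
      apply Finset.sum_pos'
      · intro k' _; exact hterm_nonneg k' a' R
      · exact ⟨k, Finset.mem_univ _, mul_pos hkpos ha'pos⟩
  have hfiltsum : ∀ (a : Idx d PI) (R : Matrix (Fin d) (Fin d) ℝ),
      (∑ a' ∈ Finset.univ.filter (fun a' => GeomLemma.vec wf a' = GeomLemma.vec wf a), ctot a' R)
      = (∑ a' ∈ Finset.univ.filter (fun a' => GeomLemma.vec wf a' = GeomLemma.vec wf a),
          ∑ k : PI, φ k R * coeff wf lamf ρ η k a' R) / D R := by
    intro a R
    rw [Finset.sum_div]
  have hinner_smooth : ∀ a : Idx d PI, ContDiffOn ℝ (⊤:ℕ∞)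
      (fun R => ∑ a' ∈ Finset.univ.filter (fun a' => GeomLemma.vec wf a' = GeomLemma.vec wf a), ctot a' R) U := by
    intro a
    apply ContDiffOn.sum
    intro a' _
    simp only [hctotdef]
    apply ContDiffOn.div
    · apply ContDiffOn.sum; intro k _
      exact ((hφsmooth k).mul (coeff_contDiff wf lamf ρ η k a')).contDiffOn
    · exact hDsmooth.contDiffOn
    · intro x hx; exact ne_of_gt hx
  refine ⟨Λ, γ, ?_, ?_, ?_⟩
  · -- unit rational
    intro ξ hξ
    obtain ⟨a, -, rfl⟩ := Finset.mem_image.1 hξ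
    exact vec_unit_rat wf hwf a
  · -- smoothness
    intro ξ hξ
    obtain ⟨a, -, rfl⟩ := Finset.mem_image.1 hξ
    have hsm : ContDiffOn ℝ (⊤:ℕ∞) (γ (GeomLemma.vec wf a)) U := by
      intro x hx
      have hpos : 0 < ∑ a' ∈ Finset.univ.filter (fun a' => GeomLemma.vec wf a' = GeomLemma.vec wf a), ctot a' x := by
        rw [hfiltsum a x]
        exact div_pos (hsumnum_pos x hx a) hx
      have hsq : ContDiffWithinAt ℝ (⊤:ℕ∞)
          (fun R => ∑ a' ∈ Finset.univ.filter (fun a' => GeomLemma.vec wf a' = GeomLemma.vec wf a), ctot a' R) U x :=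
        (hinner_smooth a) x hx
      exact (Real.contDiffAt_sqrt (ne_of_gt hpos)).comp_contDiffWithinAt x hsq
    exact hsm.mono hKU
  · -- the identity
    intro R hsym hfrob
    have hRK : R ∈ K := ⟨hsym, hfrob⟩
    have hRU : R ∈ U := hKU hRK
    have hDpos : 0 < D R := hRU
    have himage : ∑ ξ ∈ Λ, (γ ξ R)^2 • Matrix.vecMulVec ξ ξ
        = ∑ a : Idx d PI, ctot a R • Matrix.vecMulVec (GeomLemma.vec wf a) (GeomLemma.vec wf a) := by
      rw [hΛdef]
      apply Finset.sum_image'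
      intro a _
      have hval : (γ (GeomLemma.vec wf a) R)^2
          = ∑ a' ∈ Finset.univ.filter (fun a' => GeomLemma.vec wf a' = GeomLemma.vec wf a), ctot a' R := by
        simp only [hγdef]
        apply Real.sq_sqrt
        rw [hfiltsum a R]
        exact (div_pos (hsumnum_pos R hRU a) hDpos).le
      rw [hval, Finset.sum_smul]
      apply Finset.sum_congr rfl
      intro a' ha'
      rw [(Finset.mem_filter.1 ha').2]
    have hgrand : ∑ a : Idx d PI, ctot a R • Matrix.vecMulVec (GeomLemma.vec wf a) (GeomLemma.vec wf a) = R := by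
      have h1 : ∀ a : Idx d PI, ctot a R • Matrix.vecMulVec (GeomLemma.vec wf a) (GeomLemma.vec wf a)
          = ∑ k : PI, ((φ k R / D R) * coeff wf lamf ρ η k a R)
              • Matrix.vecMulVec (GeomLemma.vec wf a) (GeomLemma.vec wf a) := by
        intro a
        have : ctot a R = ∑ k : PI, (φ k R / D R) * coeff wf lamf ρ η k a R := by
          simp only [hctotdef]
          rw [Finset.sum_div]
          apply Finset.sum_congr rfl
          intro k _
          rw [mul_div_right_comm]
        rw [this, Finset.sum_smul]
      rw [Finset.sum_congr rfl fun a _ => h1 a, Finset.sum_comm]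
      have h2 : ∀ k : PI, (∑ a : Idx d PI, ((φ k R / D R) * coeff wf lamf ρ η k a R)
            • Matrix.vecMulVec (GeomLemma.vec wf a) (GeomLemma.vec wf a)) = (φ k R / D R) • R := by
        intro k
        have hstep : (∑ a : Idx d PI, ((φ k R / D R) * coeff wf lamf ρ η k a R)
              • Matrix.vecMulVec (GeomLemma.vec wf a) (GeomLemma.vec wf a))
            = (φ k R / D R) • ∑ a : Idx d PI,
                coeff wf lamf ρ η k a R • Matrix.vecMulVec (GeomLemma.vec wf a) (GeomLemma.vec wf a) := by
          rw [Finset.smul_sum]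
          apply Finset.sum_congr rfl
          intro a _
          rw [mul_smul]
        rw [hstep, patch_exact wf lamf ρ η k hsym]
      rw [Finset.sum_congr rfl fun k _ => h2 k, ← Finset.sum_smul]
      have hone : (∑ k : PI, φ k R / D R) = 1 := by
        rw [← Finset.sum_div]
        exact div_self (ne_of_gt hDpos)
      rw [hone, one_smul]
    exact (himage.trans hgrand).symm
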